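/- Let n ∈ ℕ, let B, C be n×n complex matrices with companion matrix 𝒞₁ = fromBlocks 0 1 (−C) (−B), let λ₀ ∈ ℂ, and let x₀, x₁, …, x_k ∈ ℂⁿ with x₀ ≠ 0. Set x₋₁ = x₋₂ = 0. Then the vectors x₀, …, x_k satisfy L(λ₀)·xᵢ + (2λ₀·1 + B)·x_{i−1} + x_{i−2} = 0 for all i = 0, 1, …, k (i.e. they form a Jordan chain for the pencil L(λ) = λ²·1 + λ·B + C corresponding to λ₀) if and only if the vectors hᵢ = (xᵢ, λ₀·xᵢ + x_{i−1}) ∈ ℂ^{2n}, i = 0, 1, …, k, form a Jordan chain for the matrix 𝒞₁ corresponding to λ₀, i.e. h₀ ≠ 0, 𝒞₁·h₀ = λ₀·h₀, and 𝒞₁·hᵢ = λ₀·hᵢ + h_{i−1} for i = 1, …, k. -/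
import Mathlib

open Matrix

lemma key_block (n : ℕ) (B C : Matrix (Fin n) (Fin n) ℂ) (lam : ℂ)
    (u v w : Fin n → ℂ) :
    (Matrix.fromBlocks 0 1 (-C) (-B)).mulVec (Sum.elim u (lam • u + v)) =
      lam • Sum.elim u (lam • u + v) + Sum.elim v (lam • v + w) ↔
    ((lam ^ 2) • (1 : Matrix (Fin n) (Fin n) ℂ) + lam • B + C).mulVec u +
      ((2 * lam) • (1 : Matrix (Fin n) (Fin n) ℂ) + B).mulVec v + w = 0 := by
  rw [Matrix.fromBlocks_mulVec]
  simp only [Sum.elim_comp_inl, Sum.elim_comp_inr, Matrix.zero_mulVec, Matrix.one_mulVec,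
    Matrix.neg_mulVec, Matrix.add_mulVec, Matrix.mulVec_add, Matrix.mulVec_smul,
    Matrix.smul_mulVec, zero_add]
  constructor
  · intro H
    funext j
    have := congrFun H (Sum.inr j)
    simp only [Sum.elim_inr, Pi.add_apply, Pi.neg_apply, Pi.smul_apply, Pi.zero_apply,
      smul_eq_mul] at this ⊢
    linear_combination -this
  · intro H
    funext j
    cases j with
    | inl j => simp
    | inr j =>
      have := congrFun H j
      simp only [Sum.elim_inr, Pi.add_apply, Pi.neg_apply, Pi.smul_apply, Pi.zero_apply,
        smul_eq_mul] at this ⊢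
      linear_combination -this

/-- `x₀, …, x_k` (with the conventions `x₋₁ = x₋₂ = 0`) is a Jordan chain for
the pencil `L(λ) = λ²·1 + λ·B + C` at `λ₀` iff the vectors `hᵢ = (xᵢ, λ₀xᵢ + x_{i−1})` form a
Jordan chain for the companion matrix `𝒞₁ = fromBlocks 0 1 (−C) (−B)` at `λ₀`. -/
theorem jordan_chain_pencil_iff_companion (n k : ℕ) (B C : Matrix (Fin n) (Fin n) ℂ)
    (lam : ℂ) (x : ℕ → (Fin n → ℂ)) (hx0 : x 0 ≠ 0)
    (xx : ℤ → (Fin n → ℂ))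
    (hxx : ∀ i : ℤ, xx i = if 0 ≤ i ∧ i ≤ (k : ℤ) then x i.toNat else 0)
    (h : ℤ → (Fin n ⊕ Fin n → ℂ))
    (hh : ∀ i : ℤ, h i = Sum.elim (xx i) (lam • xx i + xx (i - 1))) :
    (∀ i : ℤ, 0 ≤ i → i ≤ (k : ℤ) →
        ((lam ^ 2) • (1 : Matrix (Fin n) (Fin n) ℂ) + lam • B + C).mulVec (xx i) +
          ((2 * lam) • (1 : Matrix (Fin n) (Fin n) ℂ) + B).mulVec (xx (i - 1)) +
          xx (i - 2) = 0) ↔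
      (h 0 ≠ 0 ∧
        (Matrix.fromBlocks 0 1 (-C) (-B)).mulVec (h 0) = lam • h 0 ∧
        ∀ i : ℤ, 1 ≤ i → i ≤ (k : ℤ) →
          (Matrix.fromBlocks 0 1 (-C) (-B)).mulVec (h i) = lam • h i + h (i - 1)) := by
  have hneg : ∀ i : ℤ, i < 0 → xx i = 0 := by
    intro i hi
    rw [hxx]
    have : ¬ (0 ≤ i ∧ i ≤ (k : ℤ)) := by omega
    simp [this]
  have hx0' : xx 0 = x 0 := by
    rw [hxx]
    have : (0:ℤ) ≤ 0 ∧ (0:ℤ) ≤ (k : ℤ) := ⟨le_rfl, Int.natCast_nonneg k⟩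
    simp [this]
  have hm1 : h (-1) = 0 := by
    rw [hh]
    rw [hneg (-1) (by omega), hneg (-1 - 1) (by omega)]
    simp
  have hkey : ∀ i : ℤ,
      (((lam ^ 2) • (1 : Matrix (Fin n) (Fin n) ℂ) + lam • B + C).mulVec (xx i) +
        ((2 * lam) • (1 : Matrix (Fin n) (Fin n) ℂ) + B).mulVec (xx (i - 1)) +
        xx (i - 2) = 0) ↔
      (Matrix.fromBlocks 0 1 (-C) (-B)).mulVec (h i) = lam • h i + h (i - 1) := by
    intro i
    rw [hh i, hh (i - 1), show i - 1 - 1 = i - 2 by ring]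
    exact (key_block n B C lam (xx i) (xx (i - 1)) (xx (i - 2))).symm
  constructor
  · intro H
    refine ⟨?_, ?_, ?_⟩
    · rw [hh 0]
      intro hz
      apply hx0
      rw [← hx0']
      funext j
      exact congrFun hz (Sum.inl j)
    · have := (hkey 0).1 (H 0 le_rfl (Int.natCast_nonneg k))
      rw [show (0:ℤ) - 1 = -1 by ring, hm1, add_zero] at this
      exact this
    · intro i h1 hk
      exact (hkey i).1 (H i (by omega) hk)
  · rintro ⟨_, He, Hc⟩ i h0i hik
    rcases eq_or_lt_of_le h0i with h0 | h0
    · subst h0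
      rw [hkey 0, show (0:ℤ) - 1 = -1 by ring, hm1, add_zero]
      exact He
    · exact (hkey i).2 (Hc i (by omega) hik)
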